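/- Let φ(x, t) = η e^{μt} e^{−β(x−ct)} cos(π(x−ct)/(2R)) for x ∈ (−R + ct, R + ct) and φ = 0 otherwise, with η, β, R, μ, c > 0. Suppose c < (1/β)[m − μ + d ∫ e^{βy} J(y) cos(πy/(2R)) dy] and c = (2Rd/π) ∫ e^{βy} J(y) sin(πy/(2R)) dy, where J is continuous, even, nonnegative, ∫ J = 1, supp J ⊆ [−K, K] with K < 2R, and d, m > 0. Then for all x ∈ (−R + ct, R + ct) and t ∈ ℝ, d ∫ J(x − y) φ(y, t) dy + m φ(x, t) − ∂φ/∂t(x, t) > 0. -/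

import Mathlib

open MeasureTheory Real

set_option maxHeartbeats 1000000

/-- Sub-solution verification: with `φ(x,t) = η e^{μt} e^{-β(x-ct)} cos(π(x-ct)/(2R))` inside the
moving interval `(-R + ct, R + ct)` and `0` outside, and with `c` satisfying the two stated speed
conditions, one has `d ∫ J(x-y) φ(y,t) dy + m φ(x,t) - ∂φ/∂t(x,t) > 0` inside the interval. -/
theorem stmt11 (J : ℝ → ℝ) (d m η β R μ c K : ℝ)
    (hd : 0 < d) (hm : 0 < m) (hη : 0 < η) (hβ : 0 < β) (hR : 0 < R) (hμ : 0 < μ) (hc : 0 < c)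
    (hJc : Continuous J) (hJ0 : ∀ z, 0 ≤ J z) (hJe : ∀ z, J (-z) = J z)
    (hsupp : ∀ z, z ∉ Set.Icc (-K) K → J z = 0) (hJint : ∫ z : ℝ, J z = 1) (hKR : K < 2 * R)
    (hc1 : c < (1 / β) * (m - μ + d * ∫ y : ℝ, Real.exp (β * y) * J y * Real.cos (π * y / (2 * R))))
    (hc2 : c = (2 * R * d / π) * ∫ y : ℝ, Real.exp (β * y) * J y * Real.sin (π * y / (2 * R)))
    (φ φt : ℝ → ℝ → ℝ)
    (hφ : ∀ x t, φ x t =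
      if x ∈ Set.Ioo (-R + c * t) (R + c * t) then
        η * Real.exp (μ * t) * Real.exp (-β * (x - c * t)) * Real.cos (π * (x - c * t) / (2 * R))
      else 0)
    (hφt : ∀ x t, x ∈ Set.Ioo (-R + c * t) (R + c * t) →
      HasDerivAt (fun τ => φ x τ) (φt x t) t) :
    ∀ x t : ℝ, x ∈ Set.Ioo (-R + c * t) (R + c * t) →
      0 < d * (∫ y : ℝ, J (x - y) * φ y t) + m * φ x t - φt x t := by
  have hπ : (0:ℝ) < π := Real.pi_pos
  have h2R : (0:ℝ) < 2 * R := by linarith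
  set Ic : ℝ := ∫ y : ℝ, Real.exp (β * y) * J y * Real.cos (π * y / (2 * R)) with hIc_def
  set Is : ℝ := ∫ y : ℝ, Real.exp (β * y) * J y * Real.sin (π * y / (2 * R)) with hIs_def
  have hIc_int : Integrable (fun y => Real.exp (β * y) * J y * Real.cos (π * y / (2 * R))) := by
    apply Continuous.integrable_of_hasCompactSupport
    · fun_prop
    · exact HasCompactSupport.intro (isCompact_Icc (a := -K) (b := K))
        (fun y hy => by simp [hsupp y hy])
  have hIs_int : Integrable (fun y => Real.exp (β * y) * J y * Real.sin (π * y / (2 * R))) := by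
    apply Continuous.integrable_of_hasCompactSupport
    · fun_prop
    · exact HasCompactSupport.intro (isCompact_Icc (a := -K) (b := K))
        (fun y hy => by simp [hsupp y hy])
  -- the two speed conditions, rephrased
  have hlin : β * c < m - μ + d * Ic := by
    have h2 : β * c < β * ((1 / β) * (m - μ + d * Ic)) :=
      mul_lt_mul_of_pos_left hc1 hβ
    have h3 : β * ((1 / β) * (m - μ + d * Ic)) = m - μ + d * Ic := by
      field_simp
    linarith
  have hsin0 : d * Is = π * c / (2 * R) := by
    rw [hc2]
    field_simp
  intro x t hx
  obtain ⟨hx1, hx2⟩ := hx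
  set ξ : ℝ := x - c * t with hξ
  have hξ1 : -R < ξ := by simp only [hξ]; linarith
  have hξ2 : ξ < R := by simp only [hξ]; linarith
  set A : ℝ := η * Real.exp (μ * t) with hA
  have hApos : 0 < A := mul_pos hη (Real.exp_pos _)
  have hcosv : 0 < Real.cos (π * ξ / (2 * R)) := by
    apply Real.cos_pos_of_mem_Ioo
    constructor
    · rw [lt_div_iff₀ h2R]
      calc -(π / 2) * (2 * R) = π * -R := by ring
        _ < π * ξ := mul_lt_mul_of_pos_left hξ1 hπ
    · rw [div_lt_iff₀ h2R]
      calc π * ξ < π * R := mul_lt_mul_of_pos_left hξ2 hπ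
        _ = π / 2 * (2 * R) := by ring
  have hxmem : x ∈ Set.Ioo (-R + c * t) (R + c * t) := ⟨hx1, hx2⟩
  -- value of φ at (x, t)
  have hφval : φ x t = A * Real.exp (-β * ξ) * Real.cos (π * ξ / (2 * R)) := by
    rw [hφ, if_pos hxmem]
  -- compute φt via uniqueness of derivatives
  have hmem : ∀ᶠ τ in nhds t, φ x τ =
      η * Real.exp (μ * τ) * Real.exp (-β * (x - c * τ)) *
        Real.cos (π * (x - c * τ) / (2 * R)) := by
    have hopen : IsOpen {τ : ℝ | x ∈ Set.Ioo (-R + c * τ) (R + c * τ)} := by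
      have hset : {τ : ℝ | x ∈ Set.Ioo (-R + c * τ) (R + c * τ)} =
          (fun τ : ℝ => c * τ) ⁻¹' (Set.Ioo (x - R) (x + R)) := by
        ext τ
        simp only [Set.mem_setOf_eq, Set.mem_Ioo, Set.mem_preimage]
        constructor <;> intro h <;> exact ⟨by linarith [h.1, h.2], by linarith [h.1, h.2]⟩
      rw [hset]
      exact isOpen_Ioo.preimage (continuous_const.mul continuous_id)
    filter_upwards [hopen.mem_nhds hxmem] with τ hτ
    rw [hφ, if_pos hτ]
  have hid : HasDerivAt (fun τ : ℝ => x - c * τ) (-c) t := by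
    refine ((hasDerivAt_const t x).sub ((hasDerivAt_id t).const_mul c)).congr_deriv ?_
    ring
  have hexp1 : HasDerivAt (fun τ : ℝ => Real.exp (μ * τ)) (Real.exp (μ * t) * μ) t := by
    have h1 : HasDerivAt (fun τ : ℝ => μ * τ) μ t := by
      simpa using (hasDerivAt_id t).const_mul μ
    exact h1.exp
  have hexp2 : HasDerivAt (fun τ : ℝ => Real.exp (-β * (x - c * τ)))
      (Real.exp (-β * ξ) * (-β * -c)) t := (hid.const_mul (-β)).exp
  have hcosd : HasDerivAt (fun τ : ℝ => Real.cos (π * (x - c * τ) / (2 * R)))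
      (-Real.sin (π * ξ / (2 * R)) * (π * -c / (2 * R))) t :=
    ((hid.const_mul π).div_const (2 * R)).cos
  set D : ℝ := (μ + β * c) * (A * Real.exp (-β * ξ) * Real.cos (π * ξ / (2 * R))) +
      A * Real.exp (-β * ξ) * (π * c / (2 * R)) * Real.sin (π * ξ / (2 * R)) with hD
  have hder0 : HasDerivAt (fun τ : ℝ =>
      η * Real.exp (μ * τ) * Real.exp (-β * (x - c * τ)) *
        Real.cos (π * (x - c * τ) / (2 * R))) D t := by
    have h := ((hexp1.const_mul η).mul hexp2).mul hcosd
    refine h.congr_deriv ?_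
    rw [hD, hA]
    simp only [Pi.mul_apply]
    ring
  have hder : HasDerivAt (fun τ => φ x τ) D t :=
    hder0.congr_of_eventuallyEq hmem
  have hφtval : φt x t = D := (hφt x t hxmem).unique hder
  -- the moving-profile function
  set F : ℝ → ℝ := fun y =>
    A * Real.exp (-β * (y - c * t)) * Real.cos (π * (y - c * t) / (2 * R)) with hF
  set g : ℝ → ℝ := fun y => J (x - y) * F y with hg
  have hFc : Continuous F := by fun_prop
  have hg_int : Integrable g := by
    apply Continuous.integrable_of_hasCompactSupport
    · exact (hJc.comp (continuous_const.sub continuous_id)).mul hFc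
    · apply HasCompactSupport.intro (isCompact_Icc (a := x - K) (b := x + K))
      intro y hy
      have : x - y ∉ Set.Icc (-K) K := by
        simp only [Set.mem_Icc, not_and_or, not_le] at hy ⊢
        rcases hy with h | h
        · right; linarith
        · left; linarith
      simp [hg, hsupp _ this]
  -- the integrand with φ is the indicator restriction of g
  have hind : (fun y => J (x - y) * φ y t) =
      Set.indicator (Set.Ioo (-R + c * t) (R + c * t)) g := by
    funext y
    by_cases hy : y ∈ Set.Ioo (-R + c * t) (R + c * t)
    · rw [Set.indicator_of_mem hy, hg, hφ, if_pos hy, hF]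
    · rw [Set.indicator_of_notMem hy, hφ, if_neg hy, mul_zero]
  have hφ_int : Integrable (fun y => J (x - y) * φ y t) := by
    rw [hind]; exact hg_int.indicator measurableSet_Ioo
  -- pointwise bound: g ≤ integrand with φ
  have hptwise : ∀ y, g y ≤ J (x - y) * φ y t := by
    intro y
    by_cases hy : y ∈ Set.Ioo (-R + c * t) (R + c * t)
    · rw [hg, hφ, if_pos hy, hF]
    · rw [hφ, if_neg hy, mul_zero]
      by_cases hKy : x - y ∈ Set.Icc (-K) K
      · apply mul_nonpos_of_nonneg_of_nonpos (hJ0 _)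
        -- F y ≤ 0 outside the interval (within range K of x)
        have hKy1 : -K ≤ x - y := hKy.1
        have hKy2 : x - y ≤ K := hKy.2
        have hK0 : 0 ≤ K := by
          by_contra h
          push_neg at h
          linarith
        set u : ℝ := y - c * t with hu
        have hu3 : u < 3 * R := by
          simp only [hu]
          have : ξ = x - c * t := hξ
          linarith
        have hu3' : -(3 * R) < u := by
          simp only [hu]; linarith
        have hout : u ≤ -R ∨ R ≤ u := by
          simp only [Set.mem_Ioo, not_and_or, not_lt] at hy
          rcases hy with h | h
          · left; simp only [hu]; linarith
          · right; simp only [hu]; linarith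
        have hcosle : Real.cos (π * u / (2 * R)) ≤ 0 := by
          rcases hout with h | h
          · rw [show π * u / (2 * R) = -(π * -u / (2 * R)) by ring, Real.cos_neg]
            apply Real.cos_nonpos_of_pi_div_two_le_of_le
            · rw [le_div_iff₀ h2R]
              calc π / 2 * (2 * R) = π * R := by ring
                _ ≤ π * -u := mul_le_mul_of_nonneg_left (by linarith) hπ.le
            · rw [div_le_iff₀ h2R]
              calc π * -u ≤ π * (3 * R) :=
                    mul_le_mul_of_nonneg_left (by linarith) hπ.le
                _ ≤ (π + π / 2) * (2 * R) := le_of_eq (by ring)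
          · apply Real.cos_nonpos_of_pi_div_two_le_of_le
            · rw [le_div_iff₀ h2R]
              calc π / 2 * (2 * R) = π * R := by ring
                _ ≤ π * u := mul_le_mul_of_nonneg_left h hπ.le
            · rw [div_le_iff₀ h2R]
              calc π * u ≤ π * (3 * R) := mul_le_mul_of_nonneg_left hu3.le hπ.le
                _ ≤ (π + π / 2) * (2 * R) := le_of_eq (by ring)
        have hFy : F y = (A * Real.exp (-β * (y - c * t))) * Real.cos (π * u / (2 * R)) := by
          rw [hF]
        rw [hFy]
        exact mul_nonpos_of_nonneg_of_nonpos (by positivity) hcosle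
      · show J (x - y) * F y ≤ 0
        rw [hsupp _ hKy, zero_mul]
  have hmono : ∫ y, g y ≤ ∫ y, J (x - y) * φ y t :=
    integral_mono hg_int hφ_int hptwise
  -- change of variables and expansion
  have hcv : ∫ y, g y = ∫ z, J z * F (x - z) := by
    have : g = fun y => (fun z => J z * F (x - z)) (x - y) := by
      funext y
      simp only [hg, sub_sub_cancel]
    rw [this]
    exact integral_sub_left_eq_self (fun z => J z * F (x - z)) volume x
  have hexpand : (fun z => J z * F (x - z)) = fun z =>
      (A * Real.exp (-β * ξ) * Real.cos (π * ξ / (2 * R))) *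
        (Real.exp (β * z) * J z * Real.cos (π * z / (2 * R))) +
      (A * Real.exp (-β * ξ) * Real.sin (π * ξ / (2 * R))) *
        (Real.exp (β * z) * J z * Real.sin (π * z / (2 * R))) := by
    funext z
    have e1 : x - z - c * t = ξ - z := by rw [hξ]; ring
    have e2 : Real.exp (-β * (ξ - z)) = Real.exp (-β * ξ) * Real.exp (β * z) := by
      rw [← Real.exp_add]; ring_nf
    have e3 : π * (ξ - z) / (2 * R) = π * ξ / (2 * R) - π * z / (2 * R) := by ring
    rw [hF]
    simp only [e1, e2, e3, Real.cos_sub]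
    ring
  have hval : ∫ z, J z * F (x - z) =
      (A * Real.exp (-β * ξ) * Real.cos (π * ξ / (2 * R))) * Ic +
      (A * Real.exp (-β * ξ) * Real.sin (π * ξ / (2 * R))) * Is := by
    rw [hexpand, integral_add (hIc_int.const_mul _) (hIs_int.const_mul _),
      integral_const_mul, integral_const_mul]
  -- put everything together
  set P : ℝ := A * Real.exp (-β * ξ) with hP
  have hPpos : 0 < P := mul_pos hApos (Real.exp_pos _)
  set cv : ℝ := Real.cos (π * ξ / (2 * R)) with hcv_def
  set sv : ℝ := Real.sin (π * ξ / (2 * R)) with hsv_def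
  have hE : (P * cv) * Ic + (P * sv) * Is ≤ ∫ y, J (x - y) * φ y t := by
    calc (P * cv) * Ic + (P * sv) * Is = ∫ z, J z * F (x - z) := by rw [hval]
    _ = ∫ y, g y := hcv.symm
    _ ≤ _ := hmono
  have hkey : 0 < d * ((P * cv) * Ic + (P * sv) * Is) + m * (P * cv) - D := by
    have hrw : d * ((P * cv) * Ic + (P * sv) * Is) + m * (P * cv) - D =
        P * cv * (d * Ic + m - μ - β * c) + P * sv * (d * Is - π * c / (2 * R)) := by
      rw [hD]; ring
    rw [hrw, hsin0]
    simp only [sub_self, mul_zero, add_zero]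
    exact mul_pos (mul_pos hPpos hcosv) (by linarith)
  have hdE : d * ((P * cv) * Ic + (P * sv) * Is) ≤ d * ∫ y, J (x - y) * φ y t :=
    mul_le_mul_of_nonneg_left hE hd.le
  rw [hφval, hφtval]
  have : m * (A * Real.exp (-β * ξ) * cv) = m * (P * cv) := by rw [hP]
  linarith [hdE, hkey]
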